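/- For coprime integers a ≥ 1 and b, the Dedekind sum can be written as the cotangent sum: s(b,a) = (1/(4a)) ∑_{k=1}^{a-1} cot(kπ/a)·cot(kbπ/a). -/

import Mathlib

open Finset Real

/-- The sawtooth function `((x))`. -/
noncomputable def sawtooth (x : ℚ) : ℚ := if x.den = 1 then 0 else x - ⌊x⌋ - 1/2

/-- The Dedekind sum `s(b, a) = ∑_{k=1}^{a} ((k/a)) ((kb/a))`. -/
noncomputable def dedekindSum (b a : ℤ) : ℚ :=
  ∑ k ∈ Finset.Icc (1 : ℤ) a, sawtooth ((k : ℚ) / a) * sawtooth (((k * b : ℤ) : ℚ) / a)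


-- bridge between range and Icc sums
lemma bridge (a : ℤ) (ha : 1 ≤ a) (f : ℤ → ℝ) :
    ∑ k ∈ Finset.range a.toNat, f (k:ℤ) = f 0 + ∑ k ∈ Finset.Icc (1:ℤ) (a-1), f k := by
  have h1 : Finset.Icc (0:ℤ) (a-1) = (Finset.range a.toNat).image (fun k : ℕ => (k:ℤ)) := by
    ext x
    simp only [Finset.mem_Icc, Finset.mem_image, Finset.mem_range]
    constructor
    · rintro ⟨h0, h1⟩
      exact ⟨x.toNat, by omega, by omega⟩
    · rintro ⟨k, hk, rfl⟩
      omega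
  have h2 : ∑ k ∈ Finset.range a.toNat, f (k:ℤ) = ∑ k ∈ Finset.Icc (0:ℤ) (a-1), f k := by
    rw [h1, Finset.sum_image]
    intro x _ y _ h
    simpa using h
  rw [h2]
  have h3 : Finset.Icc (0:ℤ) (a-1) = insert 0 (Finset.Icc (1:ℤ) (a-1)) := by
    ext x; simp only [Finset.mem_Icc, Finset.mem_insert]; omega
  rw [h3, Finset.sum_insert (by simp)]

-- (ζ-1) * ∑ k ζ^k identity
lemma key_id (n : ℕ) (z : ℂ) :
    (z - 1) * ∑ k ∈ Finset.range n, (k:ℂ) * z^k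
      = ((n:ℂ) - 1) * z^n - ∑ k ∈ Finset.range n, z^k + 1 := by
  induction n with
  | zero => simp
  | succ n ih =>
    rw [Finset.sum_range_succ, Finset.sum_range_succ (f := fun k => z^k)]
    push_cast
    ring_nf
    ring_nf at ih
    linear_combination ih

lemma geom_zero (n : ℕ) (hn : 0 < n) (z : ℂ) (hz : z ≠ 1) (hzn : z^n = 1) :
    ∑ k ∈ Finset.range n, z^k = 0 := by
  rw [geom_sum_eq hz, hzn]; simp

lemma ksum (n : ℕ) (hn : 0 < n) (z : ℂ) (hz : z ≠ 1) (hzn : z^n = 1) :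
    ∑ k ∈ Finset.range n, (k:ℂ) * z^k = (n:ℂ) / (z - 1) := by
  have h := key_id n z
  rw [hzn, geom_zero n hn z hz hzn] at h
  have hz1 : z - 1 ≠ 0 := sub_ne_zero.mpr hz
  field_simp
  rw [mul_comm]
  rw [h]; ring

noncomputable def zz (a j : ℤ) : ℂ := Complex.exp ((2*π*(j:ℝ)/(a:ℝ) : ℝ) * Complex.I)

lemma zz_pow (a j : ℤ) (k : ℕ) : (zz a j)^k = Complex.exp (((k:ℝ)*(2*π*(j:ℝ)/(a:ℝ)) : ℝ) * Complex.I) := by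
  rw [zz, ← Complex.exp_nat_mul]
  congr 1
  push_cast
  ring

lemma zz_pow_re (a j : ℤ) (k : ℕ) : ((zz a j)^k).re = Real.cos (2*π*(j:ℝ)*(k:ℝ)/(a:ℝ)) := by
  rw [zz_pow, Complex.exp_ofReal_mul_I_re]
  congr 1; ring

lemma zz_pow_im (a j : ℤ) (k : ℕ) : ((zz a j)^k).im = Real.sin (2*π*(j:ℝ)*(k:ℝ)/(a:ℝ)) := by
  rw [zz_pow, Complex.exp_ofReal_mul_I_im]
  congr 1; ring

lemma zz_pow_n (a j : ℤ) (ha : 1 ≤ a) : (zz a j)^(a.toNat) = 1 := by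
  rw [zz_pow]
  have hane : (a:ℂ) ≠ 0 := by
    simp only [ne_eq, Int.cast_eq_zero]; omega
  have : ((a.toNat : ℝ) * (2*π*(j:ℝ)/(a:ℝ)) : ℝ) * Complex.I = (j:ℂ) * (2 * π * Complex.I) := by
    have hn : ((a.toNat : ℝ)) = (a:ℝ) := by exact_mod_cast congrArg Int.cast (Int.toNat_of_nonneg (by omega))
    rw [hn]
    push_cast
    field_simp
  rw [this, Complex.exp_int_mul_two_pi_mul_I]

lemma zz_ne_one (a j : ℤ) (ha : 1 ≤ a) (hj : ¬ (a ∣ j)) : zz a j ≠ 1 := by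
  rw [zz]
  intro h
  rw [Complex.exp_eq_one_iff] at h
  obtain ⟨n, hn⟩ := h
  have him := congrArg Complex.im hn
  simp at him
  have hane : (a:ℝ) ≠ 0 := by positivity
  have hpi : (π:ℝ) ≠ 0 := Real.pi_ne_zero
  have h2pi : (2*π:ℝ) ≠ 0 := by positivity
  have h3 : (j:ℝ) = (n:ℝ) * (a:ℝ) := by
    have him2 : 2*π*(j:ℝ) = 2*π*((n:ℝ)*(a:ℝ)) := by
      field_simp at him
      rw [him]; ring
    exact mul_left_cancel₀ h2pi him2
  have h4 : j = n * a := by exact_mod_cast h3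
  exact hj ⟨n, h4.trans (mul_comm n a)⟩

lemma sin_ne (a j : ℤ) (ha : 1 ≤ a) (hj : ¬ (a ∣ j)) : Real.sin ((j:ℝ)*π/(a:ℝ)) ≠ 0 := by
  intro h
  rw [Real.sin_eq_zero_iff] at h
  obtain ⟨n, hn⟩ := h
  have hane : (a:ℝ) ≠ 0 := by positivity
  have hpi : (π:ℝ) ≠ 0 := Real.pi_ne_zero
  have h3 : (j:ℝ) = (n:ℝ) * (a:ℝ) := by
    have h2 : π*((n:ℝ) * (a:ℝ)) = π*(j:ℝ) := by
      field_simp at hn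
      linear_combination π * hn
    have := mul_left_cancel₀ hpi h2
    linarith [this]
  have h4 : j = n * a := by exact_mod_cast h3
  exact hj ⟨n, h4.trans (mul_comm n a)⟩

lemma R_cos (a j : ℤ) (ha : 1 ≤ a) :
    ∑ k ∈ Finset.Icc (1:ℤ) (a-1), Real.cos (2*π*(j:ℝ)*(k:ℝ)/(a:ℝ))
      = (if a ∣ j then (a:ℝ) else 0) - 1 := by
  have hane : (a:ℝ) ≠ 0 := by positivity
  have hrange : ∑ k ∈ Finset.range a.toNat, Real.cos (2*π*(j:ℝ)*((k:ℤ):ℝ)/(a:ℝ))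
      = (if a ∣ j then (a:ℝ) else 0) := by
    by_cases hd : a ∣ j
    · obtain ⟨t, rfl⟩ := hd
      rw [if_pos ⟨t, rfl⟩]
      have : ∀ k ∈ Finset.range a.toNat, Real.cos (2*π*((a*t:ℤ):ℝ)*((k:ℤ):ℝ)/(a:ℝ)) = 1 := by
        intro k _
        have harg : 2*π*((a*t:ℤ):ℝ)*((k:ℤ):ℝ)/(a:ℝ) = ((t*k:ℤ):ℝ) * (2*π) := by
          push_cast; field_simp
        rw [harg, Real.cos_int_mul_two_pi]
      rw [Finset.sum_congr rfl this]
      simp only [Finset.sum_const, Finset.card_range, nsmul_eq_mul, mul_one]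
      exact_mod_cast congrArg Int.cast (Int.toNat_of_nonneg (by omega : (0:ℤ) ≤ a))
    · rw [if_neg hd]
      have h0 := geom_zero a.toNat (by omega) (zz a j) (zz_ne_one a j ha hd) (zz_pow_n a j ha)
      have := congrArg Complex.re h0
      rw [Complex.re_sum] at this
      simp only [Complex.zero_re] at this
      rw [← this]
      apply Finset.sum_congr rfl
      intro k _
      rw [zz_pow_re]
      norm_num
  have hb := bridge a ha (fun k => Real.cos (2*π*(j:ℝ)*(k:ℝ)/(a:ℝ)))
  rw [hrange] at hb
  have h0 : Real.cos (2*π*(j:ℝ)*((0:ℤ):ℝ)/(a:ℝ)) = 1 := by norm_num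
  rw [h0] at hb
  linarith [hb]

lemma R_sin (a j : ℤ) (ha : 1 ≤ a) :
    ∑ k ∈ Finset.Icc (1:ℤ) (a-1), Real.sin (2*π*(j:ℝ)*(k:ℝ)/(a:ℝ)) = 0 := by
  have hane : (a:ℝ) ≠ 0 := by positivity
  have hrange : ∑ k ∈ Finset.range a.toNat, Real.sin (2*π*(j:ℝ)*((k:ℤ):ℝ)/(a:ℝ)) = 0 := by
    by_cases hd : a ∣ j
    · obtain ⟨t, rfl⟩ := hd
      apply Finset.sum_eq_zero
      intro k _
      have harg : 2*π*((a*t:ℤ):ℝ)*((k:ℤ):ℝ)/(a:ℝ) = ((2*t*k:ℤ):ℝ) * π := by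
        push_cast; field_simp
      rw [harg]
      exact Real.sin_int_mul_pi _
    · have h0 := geom_zero a.toNat (by omega) (zz a j) (zz_ne_one a j ha hd) (zz_pow_n a j ha)
      have := congrArg Complex.im h0
      rw [Complex.im_sum] at this
      simp only [Complex.zero_im] at this
      rw [← this]
      apply Finset.sum_congr rfl
      intro k _
      rw [zz_pow_im]
      norm_num
  have hb := bridge a ha (fun k => Real.sin (2*π*(j:ℝ)*(k:ℝ)/(a:ℝ)))
  rw [hrange] at hb
  have h0 : Real.sin (2*π*(j:ℝ)*((0:ℤ):ℝ)/(a:ℝ)) = 0 := by norm_num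
  rw [h0] at hb
  linarith [hb]

lemma R_ksin (a j : ℤ) (ha : 1 ≤ a) (hj : ¬ (a ∣ j)) :
    ∑ k ∈ Finset.Icc (1:ℤ) (a-1), (k:ℝ) * Real.sin (2*π*(j:ℝ)*(k:ℝ)/(a:ℝ))
      = -((a:ℝ)/2) * (Real.cos ((j:ℝ)*π/(a:ℝ)) / Real.sin ((j:ℝ)*π/(a:ℝ))) := by
  have hane : (a:ℝ) ≠ 0 := by positivity
  have hs := sin_ne a j ha hj
  set φ : ℝ := (j:ℝ)*π/(a:ℝ) with hφ
  have hθ : 2*π*(j:ℝ)/(a:ℝ) = 2*φ := by rw [hφ]; ring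
  -- complex sum
  have hk := ksum a.toNat (by omega) (zz a j) (zz_ne_one a j ha hj) (zz_pow_n a j ha)
  have him := congrArg Complex.im hk
  rw [Complex.im_sum] at him
  -- LHS terms
  have hterm : ∀ k : ℕ, ((k:ℂ) * (zz a j)^k).im = (k:ℝ) * Real.sin (2*π*(j:ℝ)*(k:ℝ)/(a:ℝ)) := by
    intro k
    rw [Complex.mul_im, zz_pow_im, zz_pow_re]
    simp
  -- RHS: im of n/(ζ-1)
  have hzre : (zz a j).re = Real.cos (2*φ) := by
    rw [zz, Complex.exp_ofReal_mul_I_re, hθ]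
  have hzim : (zz a j).im = Real.sin (2*φ) := by
    rw [zz, Complex.exp_ofReal_mul_I_im, hθ]
  have hrhs : ((a.toNat : ℂ) / (zz a j - 1)).im
      = -((a:ℝ)/2) * (Real.cos φ / Real.sin φ) := by
    rw [div_eq_mul_inv, Complex.mul_im, Complex.inv_re, Complex.inv_im]
    simp only [Complex.natCast_re, Complex.natCast_im, Complex.sub_re, Complex.sub_im,
      Complex.one_re, Complex.one_im, hzre, hzim]
    have hnq : Complex.normSq (zz a j - 1) = 4 * (Real.sin φ)^2 := by
      rw [Complex.normSq_apply]
      simp only [Complex.sub_re, Complex.sub_im, Complex.one_re, Complex.one_im, hzre, hzim]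
      rw [Real.cos_two_mul, Real.sin_two_mul]
      have := Real.sin_sq_add_cos_sq φ
      linear_combination (4*Real.cos φ^2 - 4) * this
    rw [hnq, Real.cos_two_mul, Real.sin_two_mul]
    have hna : ((a.toNat : ℝ)) = (a:ℝ) := by exact_mod_cast congrArg Int.cast (Int.toNat_of_nonneg (by omega : (0:ℤ) ≤ a))
    rw [hna]
    field_simp
    ring
  rw [hrhs] at him
  have him2 : ∑ k ∈ Finset.range a.toNat, (k:ℝ) * Real.sin (2*π*(j:ℝ)*(k:ℝ)/(a:ℝ))
      = -((a:ℝ)/2) * (Real.cos φ / Real.sin φ) :=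
    (Finset.sum_congr rfl (fun k _ => (hterm k).symm)).trans him
  have hb := bridge a ha (fun k => (k:ℝ) * Real.sin (2*π*(j:ℝ)*(k:ℝ)/(a:ℝ)))
  push_cast at hb
  push_cast at him2
  rw [him2] at hb
  simp only [zero_mul, zero_add] at hb
  linarith [hb]

noncomputable def sawR (a m : ℤ) : ℝ := if a ∣ m then 0 else Int.fract ((m:ℝ)/(a:ℝ)) - 1/2

lemma den_one_iff (a m : ℤ) (ha : 1 ≤ a) : ((m:ℚ)/(a:ℚ)).den = 1 ↔ a ∣ m := by
  have hane : (a:ℚ) ≠ 0 := by exact_mod_cast (by omega : (a:ℤ) ≠ 0)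
  constructor
  · intro h
    rw [Rat.den_eq_one_iff] at h
    refine ⟨((m:ℚ)/(a:ℚ)).num, ?_⟩
    have : (m:ℚ) = (a:ℚ) * (((m:ℚ)/(a:ℚ)).num : ℚ) := by
      rw [h]; field_simp
    exact_mod_cast this
  · rintro ⟨c, rfl⟩
    have : ((a*c:ℤ):ℚ)/(a:ℚ) = (c:ℚ) := by push_cast; field_simp
    rw [this]
    exact Rat.den_intCast c

lemma saw_cast (a m : ℤ) (ha : 1 ≤ a) : ((sawtooth ((m:ℚ)/(a:ℚ)) : ℚ) : ℝ) = sawR a m := by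
  rw [sawtooth, sawR]
  by_cases hd : a ∣ m
  · rw [if_pos ((den_one_iff a m ha).mpr hd), if_pos hd]; norm_num
  · rw [if_neg (fun h => hd ((den_one_iff a m ha).mp h)), if_neg hd]
    have hf : ((⌊(m:ℚ)/(a:ℚ)⌋ : ℤ)) = ⌊(m:ℝ)/(a:ℝ)⌋ := by
      rw [← Rat.floor_cast (α := ℝ) ((m:ℚ)/(a:ℚ))]
      congr 1
      push_cast
      ring
    push_cast [hf]
    rw [Int.fract]

lemma emod_mem (a m : ℤ) (ha : 1 ≤ a) (hm : ¬ a ∣ m) : m % a ∈ Finset.Icc (1:ℤ) (a-1) := by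
  simp only [Finset.mem_Icc]
  have h1 : 0 ≤ m % a := Int.emod_nonneg m (by omega)
  have h2 : m % a < a := Int.emod_lt_of_pos m (by omega)
  have h3 : m % a ≠ 0 := fun h => hm (Int.dvd_of_emod_eq_zero h)
  omega

lemma fract_eq (a m : ℤ) (ha : 1 ≤ a) : Int.fract ((m:ℝ)/(a:ℝ)) = ((m % a : ℤ):ℝ)/(a:ℝ) := by
  have hane : (a:ℝ) ≠ 0 := by positivity
  have hsplit : (m:ℝ)/(a:ℝ) = ((m / a : ℤ) : ℝ) + ((m % a : ℤ):ℝ)/(a:ℝ) := by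
    have h := Int.mul_ediv_add_emod m a
    have h0 : (a:ℝ) * ((m/a:ℤ):ℝ) + ((m % a:ℤ):ℝ) = (m:ℝ) := by exact_mod_cast congrArg (fun x:ℤ => (x:ℝ)) h
    field_simp
    linear_combination -h0
  rw [hsplit, Int.fract_intCast_add, Int.fract_eq_self.mpr]
  constructor
  · apply div_nonneg (by exact_mod_cast Int.emod_nonneg m (by omega : (a:ℤ) ≠ 0)) (by positivity)
  · rw [div_lt_one (by positivity)]
    exact_mod_cast Int.emod_lt_of_pos m (by omega)

lemma L2' (a j : ℤ) (ha : 1 ≤ a) (hj : ¬ a ∣ j) :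
    ∑ r ∈ Finset.Icc (1:ℤ) (a-1), ((r:ℝ)/(a:ℝ) - 1/2) * Real.sin (2*π*(j:ℝ)*(r:ℝ)/(a:ℝ))
      = -(1/2) * (Real.cos ((j:ℝ)*π/(a:ℝ)) / Real.sin ((j:ℝ)*π/(a:ℝ))) := by
  have hane : (a:ℝ) ≠ 0 := by positivity
  have hsplit : ∀ r ∈ Finset.Icc (1:ℤ) (a-1),
      ((r:ℝ)/(a:ℝ) - 1/2) * Real.sin (2*π*(j:ℝ)*(r:ℝ)/(a:ℝ))
        = (1/(a:ℝ)) * ((r:ℝ) * Real.sin (2*π*(j:ℝ)*(r:ℝ)/(a:ℝ)))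
          - (1/2) * Real.sin (2*π*(j:ℝ)*(r:ℝ)/(a:ℝ)) := by
    intro r _
    field_simp
  rw [Finset.sum_congr rfl hsplit, Finset.sum_sub_distrib, ← Finset.mul_sum, ← Finset.mul_sum,
    R_ksin a j ha hj, R_sin a j ha]
  field_simp
  rw [sub_zero]

lemma L3 (a r m : ℤ) (ha : 1 ≤ a) :
    ∑ k ∈ Finset.Icc (1:ℤ) (a-1),
        Real.sin (2*π*(r:ℝ)*(k:ℝ)/(a:ℝ)) * Real.sin (2*π*(m:ℝ)*(k:ℝ)/(a:ℝ))
      = ((a:ℝ)/2) * ((if a ∣ m - r then (1:ℝ) else 0) - (if a ∣ m + r then (1:ℝ) else 0)) := by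
  have hane : (a:ℝ) ≠ 0 := by positivity
  have hterm : ∀ k ∈ Finset.Icc (1:ℤ) (a-1),
      Real.sin (2*π*(r:ℝ)*(k:ℝ)/(a:ℝ)) * Real.sin (2*π*(m:ℝ)*(k:ℝ)/(a:ℝ))
        = (Real.cos (2*π*((m-r:ℤ):ℝ)*(k:ℝ)/(a:ℝ)) - Real.cos (2*π*((m+r:ℤ):ℝ)*(k:ℝ)/(a:ℝ)))/2 := by
    intro k _
    have h1 : 2*π*((m-r:ℤ):ℝ)*(k:ℝ)/(a:ℝ)
        = 2*π*(m:ℝ)*(k:ℝ)/(a:ℝ) - 2*π*(r:ℝ)*(k:ℝ)/(a:ℝ) := by push_cast; ring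
    have h2 : 2*π*((m+r:ℤ):ℝ)*(k:ℝ)/(a:ℝ)
        = 2*π*(m:ℝ)*(k:ℝ)/(a:ℝ) + 2*π*(r:ℝ)*(k:ℝ)/(a:ℝ) := by push_cast; ring
    rw [h1, h2, Real.cos_sub, Real.cos_add]
    ring
  rw [Finset.sum_congr rfl hterm, ← Finset.sum_div, Finset.sum_sub_distrib,
    R_cos a (m-r) ha, R_cos a (m+r) ha]
  by_cases h1 : a ∣ m - r <;> by_cases h2 : a ∣ m + r <;>
    simp [h1, h2] <;> ring

lemma A_eq (a m : ℤ) (ha : 1 ≤ a) :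
    ∑ r ∈ Finset.Icc (1:ℤ) (a-1), ((r:ℝ)/(a:ℝ) - 1/2) * (if a ∣ m - r then (1:ℝ) else 0)
      = sawR a m := by
  by_cases hm : a ∣ m
  · rw [sawR, if_pos hm]
    apply Finset.sum_eq_zero
    intro r hr
    simp only [Finset.mem_Icc] at hr
    have hnd : ¬ a ∣ m - r := by
      intro h
      have h2 : a ∣ r := by
        have := dvd_sub hm h
        simpa using this
      have := Int.le_of_dvd (by omega) h2
      omega
    rw [if_neg hnd, mul_zero]
  · rw [Finset.sum_eq_single (m % a)]
    · have hd : a ∣ m - m % a := Int.dvd_self_sub_of_emod_eq rfl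
      rw [if_pos hd, mul_one, sawR, if_neg hm, fract_eq a m ha]
    · intro r hr hne
      simp only [Finset.mem_Icc] at hr
      have hnd : ¬ a ∣ m - r := by
        intro h
        have h1 : m % a = r % a := Int.emod_eq_emod_iff_emod_sub_eq_zero.mpr (Int.emod_eq_zero_of_dvd h)
        have h2 : r % a = r := Int.emod_eq_of_lt (by omega) (by omega)
        exact hne (by omega)
      rw [if_neg hnd, mul_zero]
    · intro h
      exact absurd (emod_mem a m ha hm) h

lemma B_eq (a m : ℤ) (ha : 1 ≤ a) :
    ∑ r ∈ Finset.Icc (1:ℤ) (a-1), ((r:ℝ)/(a:ℝ) - 1/2) * (if a ∣ m + r then (1:ℝ) else 0)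
      = - sawR a m := by
  have hane : (a:ℝ) ≠ 0 := by positivity
  rw [← A_eq a m ha, ← Finset.sum_neg_distrib]
  apply Finset.sum_nbij' (fun r => a - r) (fun r => a - r)
  · intro r hr; simp only [Finset.mem_Icc] at *; omega
  · intro r hr; simp only [Finset.mem_Icc] at *; omega
  · intro r _; omega
  · intro r _; omega
  · intro r hr
    simp only [Finset.mem_Icc] at hr
    have hiff : (a ∣ m + r) ↔ (a ∣ m - (a - r)) := by
      constructor
      · intro h
        have := dvd_sub h (dvd_refl a)
        have he : m + r - a = m - (a - r) := by ring
        rwa [he] at this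
      · intro h
        have := dvd_add h (dvd_refl a)
        have he : m - (a - r) + a = m + r := by ring
        rwa [he] at this
    have hcoef : (((a - r : ℤ)):ℝ)/(a:ℝ) - 1/2 = -((r:ℝ)/(a:ℝ) - 1/2) := by
      push_cast
      field_simp
      ring
    by_cases h : a ∣ m + r
    · rw [if_pos h, if_pos (hiff.mp h), hcoef]
      ring
    · rw [if_neg h, if_neg (fun h2 => h (hiff.mpr h2))]
      ring

lemma hak_lemma (a : ℤ) (ha : 1 ≤ a) : ∀ k ∈ Finset.Icc (1:ℤ) (a-1), ¬ a ∣ k := by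
  intro k hk hd
  simp only [Finset.mem_Icc] at hk
  have := Int.le_of_dvd (by omega) hd
  omega

lemma saw_fourier (a m : ℤ) (ha : 1 ≤ a) :
    sawR a m = -(1/(2*(a:ℝ))) * ∑ k ∈ Finset.Icc (1:ℤ) (a-1),
      (Real.cos ((k:ℝ)*π/(a:ℝ)) / Real.sin ((k:ℝ)*π/(a:ℝ))) * Real.sin (2*π*(m:ℝ)*(k:ℝ)/(a:ℝ)) := by
  have hane : (a:ℝ) ≠ 0 := by positivity
  have hcot : ∀ k ∈ Finset.Icc (1:ℤ) (a-1),
      (Real.cos ((k:ℝ)*π/(a:ℝ)) / Real.sin ((k:ℝ)*π/(a:ℝ))) * Real.sin (2*π*(m:ℝ)*(k:ℝ)/(a:ℝ))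
        = ∑ r ∈ Finset.Icc (1:ℤ) (a-1),
            (-2) * (((r:ℝ)/(a:ℝ) - 1/2) *
              (Real.sin (2*π*(r:ℝ)*(k:ℝ)/(a:ℝ)) * Real.sin (2*π*(m:ℝ)*(k:ℝ)/(a:ℝ)))) := by
    intro k hk
    have h := L2' a k ha (hak_lemma a ha k hk)
    have hc : Real.cos ((k:ℝ)*π/(a:ℝ)) / Real.sin ((k:ℝ)*π/(a:ℝ))
        = -2 * ∑ r ∈ Finset.Icc (1:ℤ) (a-1), ((r:ℝ)/(a:ℝ) - 1/2) * Real.sin (2*π*(k:ℝ)*(r:ℝ)/(a:ℝ)) := by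
      rw [h]; ring
    rw [hc, Finset.mul_sum, Finset.sum_mul]
    apply Finset.sum_congr rfl
    intro r _
    rw [show 2*π*(k:ℝ)*(r:ℝ)/(a:ℝ) = 2*π*(r:ℝ)*(k:ℝ)/(a:ℝ) by ring]
    ring
  rw [Finset.sum_congr rfl hcot, Finset.sum_comm]
  have hinner : ∀ r ∈ Finset.Icc (1:ℤ) (a-1),
      ∑ k ∈ Finset.Icc (1:ℤ) (a-1),
        (-2) * (((r:ℝ)/(a:ℝ) - 1/2) *
          (Real.sin (2*π*(r:ℝ)*(k:ℝ)/(a:ℝ)) * Real.sin (2*π*(m:ℝ)*(k:ℝ)/(a:ℝ))))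
      = (-(a:ℝ)) * (((r:ℝ)/(a:ℝ) - 1/2) * (if a ∣ m - r then (1:ℝ) else 0))
        + (a:ℝ) * (((r:ℝ)/(a:ℝ) - 1/2) * (if a ∣ m + r then (1:ℝ) else 0)) := by
    intro r _
    rw [← Finset.mul_sum]
    have : ∑ k ∈ Finset.Icc (1:ℤ) (a-1),
        ((r:ℝ)/(a:ℝ) - 1/2) *
          (Real.sin (2*π*(r:ℝ)*(k:ℝ)/(a:ℝ)) * Real.sin (2*π*(m:ℝ)*(k:ℝ)/(a:ℝ)))
        = ((r:ℝ)/(a:ℝ) - 1/2) * (((a:ℝ)/2) * ((if a ∣ m - r then (1:ℝ) else 0) - (if a ∣ m + r then (1:ℝ) else 0))) := by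
      rw [← Finset.mul_sum, L3 a r m ha]
    rw [this]
    ring
  rw [Finset.sum_congr rfl hinner, Finset.sum_add_distrib, ← Finset.mul_sum, ← Finset.mul_sum,
    A_eq a m ha, B_eq a m ha]
  field_simp
  ring

lemma L2 (a j : ℤ) (ha : 1 ≤ a) (hj : ¬ a ∣ j) :
    ∑ m ∈ Finset.Icc (1:ℤ) a, sawR a m * Real.sin (2*π*(j:ℝ)*(m:ℝ)/(a:ℝ))
      = -(1/2) * (Real.cos ((j:ℝ)*π/(a:ℝ)) / Real.sin ((j:ℝ)*π/(a:ℝ))) := by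
  have hsa : Finset.Icc (1:ℤ) a = insert a (Finset.Icc (1:ℤ) (a-1)) := by
    ext x; simp only [Finset.mem_Icc, Finset.mem_insert]; omega
  rw [hsa, Finset.sum_insert (by simp only [Finset.mem_Icc]; omega)]
  have hz : sawR a a = 0 := by simp [sawR]
  rw [hz, zero_mul, zero_add]
  have hterm : ∀ m ∈ Finset.Icc (1:ℤ) (a-1),
      sawR a m * Real.sin (2*π*(j:ℝ)*(m:ℝ)/(a:ℝ))
        = ((m:ℝ)/(a:ℝ) - 1/2) * Real.sin (2*π*(j:ℝ)*(m:ℝ)/(a:ℝ)) := by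
    intro m hm
    simp only [Finset.mem_Icc] at hm
    rw [sawR, if_neg (hak_lemma a ha m (by simp only [Finset.mem_Icc]; omega)), fract_eq a m ha,
      Int.emod_eq_of_lt (by omega) (by omega)]
  rw [Finset.sum_congr rfl hterm]
  exact L2' a j ha hj

theorem dedekindSum_eq_cot_sum' (a b : ℤ) (ha : 1 ≤ a) (hab : Int.gcd a b = 1) :
    ((∑ k ∈ Finset.Icc (1 : ℤ) a, sawtooth ((k : ℚ) / a) * sawtooth (((k * b : ℤ) : ℚ) / a) : ℚ) : ℝ)
      = 1 / (4 * (a : ℝ)) * ∑ k ∈ Finset.Icc (1 : ℤ) (a - 1),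
          (Real.cos ((k : ℝ) * Real.pi / a) / Real.sin ((k : ℝ) * Real.pi / a)) *
          (Real.cos ((k : ℝ) * (b : ℝ) * Real.pi / a) / Real.sin ((k : ℝ) * (b : ℝ) * Real.pi / a)) := by
  have hane : (a:ℝ) ≠ 0 := by positivity
  have hco : IsCoprime (a:ℤ) b := Int.isCoprime_iff_gcd_eq_one.mpr hab
  rw [Rat.cast_sum]
  have hcast : ∀ m ∈ Finset.Icc (1:ℤ) a,
      ((sawtooth ((m:ℚ)/(a:ℚ)) * sawtooth (((m*b:ℤ):ℚ)/(a:ℚ)) : ℚ) : ℝ) = sawR a m * sawR a (m*b) := by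
    intro m _
    rw [Rat.cast_mul, saw_cast a m ha, saw_cast a (m*b) ha]
  rw [Finset.sum_congr rfl hcast]
  have hexp : ∀ m ∈ Finset.Icc (1:ℤ) a, sawR a m * sawR a (m*b)
      = ∑ k ∈ Finset.Icc (1:ℤ) (a-1), (-(1/(2*(a:ℝ)))) *
          ((Real.cos ((k:ℝ)*π/(a:ℝ)) / Real.sin ((k:ℝ)*π/(a:ℝ))) *
            (sawR a m * Real.sin (2*π*(((m*b:ℤ)):ℝ)*(k:ℝ)/(a:ℝ)))) := by
    intro m _
    conv_lhs => rw [saw_fourier a (m*b) ha]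
    rw [Finset.mul_sum, Finset.mul_sum]
    apply Finset.sum_congr rfl
    intro k _
    ring
  rw [Finset.sum_congr rfl hexp, Finset.sum_comm]
  have hin : ∀ k ∈ Finset.Icc (1:ℤ) (a-1),
      ∑ m ∈ Finset.Icc (1:ℤ) a, (-(1/(2*(a:ℝ)))) *
          ((Real.cos ((k:ℝ)*π/(a:ℝ)) / Real.sin ((k:ℝ)*π/(a:ℝ))) *
            (sawR a m * Real.sin (2*π*(((m*b:ℤ)):ℝ)*(k:ℝ)/(a:ℝ))))
        = 1/(4*(a:ℝ)) * ((Real.cos ((k:ℝ)*π/(a:ℝ)) / Real.sin ((k:ℝ)*π/(a:ℝ))) *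
            (Real.cos ((k:ℝ)*(b:ℝ)*π/(a:ℝ)) / Real.sin ((k:ℝ)*(b:ℝ)*π/(a:ℝ)))) := by
    intro k hk
    have hndvd : ¬ a ∣ k*b := fun h => hak_lemma a ha k hk (hco.dvd_of_dvd_mul_right h)
    have hargs : ∀ m ∈ Finset.Icc (1:ℤ) a,
        (-(1/(2*(a:ℝ)))) * ((Real.cos ((k:ℝ)*π/(a:ℝ)) / Real.sin ((k:ℝ)*π/(a:ℝ))) *
            (sawR a m * Real.sin (2*π*(((m*b:ℤ)):ℝ)*(k:ℝ)/(a:ℝ))))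
          = (-(1/(2*(a:ℝ)))) * (Real.cos ((k:ℝ)*π/(a:ℝ)) / Real.sin ((k:ℝ)*π/(a:ℝ))) *
              (sawR a m * Real.sin (2*π*(((k*b:ℤ)):ℝ)*(m:ℝ)/(a:ℝ))) := by
      intro m _
      rw [show 2*π*(((m*b:ℤ)):ℝ)*(k:ℝ)/(a:ℝ) = 2*π*(((k*b:ℤ)):ℝ)*(m:ℝ)/(a:ℝ) by push_cast; ring]
      ring
    rw [Finset.sum_congr rfl hargs, ← Finset.mul_sum, L2 a (k*b) ha hndvd]
    have h1 : ((k*b:ℤ):ℝ)*π/(a:ℝ) = (k:ℝ)*(b:ℝ)*π/(a:ℝ) := by push_cast; ring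
    rw [h1]
    field_simp
    ring
  rw [Finset.sum_congr rfl hin, ← Finset.mul_sum]


theorem dedekindSum_eq_cot_sum (a b : ℤ) (ha : 1 ≤ a) (hab : Int.gcd a b = 1) :
    (dedekindSum b a : ℝ)
      = 1 / (4 * (a : ℝ)) * ∑ k ∈ Finset.Icc (1 : ℤ) (a - 1),
          (Real.cos ((k : ℝ) * Real.pi / a) / Real.sin ((k : ℝ) * Real.pi / a)) *
          (Real.cos ((k : ℝ) * (b : ℝ) * Real.pi / a) / Real.sin ((k : ℝ) * (b : ℝ) * Real.pi / a)) := by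
  rw [dedekindSum]
  exact dedekindSum_eq_cot_sum' a b ha hab
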